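/- Let A, b, C, S, κ, η ∈ ℝ with C > 0, S ≥ 0, η > 0 and κ ≥ 0. Define f(ξ) := −A·ξ + b·ξ² − C·ξ³ + S. Assume f(η) ≤ 0 and κ ≥ A − 2b·ξ + 3C·ξ² for every ξ ∈ [0, η]. Then |κ·ξ + f(ξ)| ≤ κ·η for all ξ ∈ [0, η]. -/

import Mathlib

/-- Uniform bound `|κξ + f(ξ)| ≤ κη` on `[0, η]` for
`f(ξ) = −Aξ + bξ² − Cξ³ + S`, provided `f(η) ≤ 0` and
`κ ≥ A − 2bξ + 3Cξ²` on `[0, η]`. -/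
theorem stmt_14 (A b C S κ η : ℝ) (hC : 0 < C) (hS : 0 ≤ S) (hη : 0 < η)
    (hκ0 : 0 ≤ κ)
    (hfη : -A * η + b * η ^ 2 - C * η ^ 3 + S ≤ 0)
    (hκ : ∀ ξ ∈ Set.Icc (0 : ℝ) η, A - 2 * b * ξ + 3 * C * ξ ^ 2 ≤ κ) :
    ∀ ξ ∈ Set.Icc (0 : ℝ) η,
      |κ * ξ + (-A * ξ + b * ξ ^ 2 - C * ξ ^ 3 + S)| ≤ κ * η := by
  set g : ℝ → ℝ := fun x => κ * x + (-A * x + b * x ^ 2 - C * x ^ 3 + S) with hg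
  have hD : ∀ x : ℝ, HasDerivAt g (κ + (-A + b * (2 * x) - C * (3 * x ^ 2))) x := by
    intro x
    have h1 := (hasDerivAt_id x).const_mul κ
    have h2 := (hasDerivAt_id x).const_mul (-A)
    have h3 := (hasDerivAt_pow 2 x).const_mul b
    have h4 := (hasDerivAt_pow 3 x).const_mul C
    have := (h1.add (((h2.add h3).sub h4).add_const S))
    refine (this.congr_deriv (by simp)).congr_of_eventuallyEq (Filter.Eventually.of_forall fun y => ?_)
    simp [hg]
  have hmono : MonotoneOn g (Set.Icc 0 η) := by
    apply monotoneOn_of_deriv_nonneg (convex_Icc 0 η)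
    · exact fun x hx => (hD x).continuousAt.continuousWithinAt
    · exact fun x hx => (hD x).differentiableAt.differentiableWithinAt
    · intro x hx
      rw [interior_Icc] at hx
      rw [(hD x).deriv]
      have := hκ x ⟨hx.1.le, hx.2.le⟩
      linarith
  intro ξ hξ
  have h1 : g ξ ≤ g η := hmono hξ (Set.mem_Icc.mpr ⟨hη.le, le_rfl⟩) hξ.2
  have h0 : g 0 ≤ g ξ := hmono (Set.mem_Icc.mpr ⟨le_rfl, hη.le⟩) hξ hξ.1
  have hg0 : g 0 = S := by simp [hg]
  have hgη : g η = κ * η + (-A * η + b * η ^ 2 - C * η ^ 3 + S) := rfl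
  simp only [hg, hg0] at h0 h1
  rw [abs_le]
  constructor
  · nlinarith [mul_nonneg hκ0 hη.le]
  · nlinarith
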